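/- Let ε₀ > 0 and λ = e^{ε₀}. For each d ≥ 2, let W_d : Fin d → Fin d → ℝ be a channel with strictly positive entries, rows probability vectors, satisfying the λ-ratio bound, and define ν_{ab,d} and I_d^★ as the pairwise likelihood-ratio laws and the worst-case pairwise χ² divergence. Then limsup_{d→∞} I_d^★ > 0 if and only if there exist a strictly increasing sequence d_m → ∞, pairs a_m ≠ b_m in Fin d_m, and a probability measure ν on ℝ with ν ≠ δ₁ such that ν_{a_m b_m, d_m} converges weakly to ν as m → ∞. -/

import Mathlib

open Finset BigOperators MeasureTheory Filter Topology

lemma auxDistIcc {u v M : ℝ} (hu : u ∈ Set.Icc 0 M) (hv : v ∈ Set.Icc 0 M) : dist u v ≤ M := by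
  rw [Real.dist_eq, abs_sub_le_iff]
  constructor <;> nlinarith [hu.1, hu.2, hv.1, hv.2]

noncomputable def clampBCF (f : ℝ → ℝ) (M : ℝ) (hc : Continuous f) (h0 : ∀ x, 0 ≤ f x)
    (hM : ∀ x, f x ≤ M) : BoundedContinuousFunction ℝ ℝ :=
  ⟨⟨f, hc⟩, M, fun x y => auxDistIcc ⟨h0 x, hM x⟩ ⟨h0 y, hM y⟩⟩

@[simp] lemma clampBCF_apply (f : ℝ → ℝ) (M : ℝ) (hc h0 hM) (x : ℝ) :
    clampBCF f M hc h0 hM x = f x := rfl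

lemma integral_sum_smul_dirac {d : ℕ} (w r : Fin d → ℝ) (hw : ∀ y, 0 ≤ w y)
    (f : BoundedContinuousFunction ℝ ℝ) :
    ∫ x, f x ∂(∑ y, ENNReal.ofReal (w y) • Measure.dirac (r y)) = ∑ y, w y * f (r y) := by
  rw [MeasureTheory.integral_finset_sum_measure ?_]
  · refine Finset.sum_congr rfl fun y _ => ?_
    rw [MeasureTheory.integral_smul_measure, MeasureTheory.integral_dirac,
      ENNReal.toReal_ofReal (hw y), smul_eq_mul]
  · intro y _
    exact (f.integrable _).smul_measure ENNReal.ofReal_ne_top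

lemma discrete_ibp {d : ℕ} (w ρ : Fin d → ℝ) (Bb : ℝ) (p : Polynomial ℝ)
    (hρ : ∀ y, 0 < ρ y ∧ ρ y ≤ Bb) :
    ∑ y, w y * Polynomial.eval (ρ y) p
      = (∑ y, w y) * Polynomial.eval Bb p
        - ∫ t in Set.Ioc (0:ℝ) Bb, Polynomial.eval t p.derivative *
            (∑ y, if ρ y ≤ t then w y else 0) := by
  have hcont : Continuous fun t : ℝ => Polynomial.eval t p.derivative := p.derivative.continuous_aeval
  have hint : ∀ y : Fin d, ∫ t in Set.Ioc (0:ℝ) Bb,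
      (Set.Ici (ρ y)).indicator (fun t => w y * Polynomial.eval t p.derivative) t
      = w y * (Polynomial.eval Bb p - Polynomial.eval (ρ y) p) := by
    intro y
    rw [MeasureTheory.integral_indicator measurableSet_Ici,
        MeasureTheory.Measure.restrict_restrict measurableSet_Ici]
    have hset : Set.Ici (ρ y) ∩ Set.Ioc 0 Bb = Set.Icc (ρ y) Bb := by
      ext x
      simp only [Set.mem_inter_iff, Set.mem_Ici, Set.mem_Ioc, Set.mem_Icc]
      constructor
      · rintro ⟨h1, _, h3⟩; exact ⟨h1, h3⟩
      · rintro ⟨h1, h2⟩; exact ⟨h1, lt_of_lt_of_le (hρ y).1 h1, h2⟩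
    rw [hset, integral_Icc_eq_integral_Ioc, ← intervalIntegral.integral_of_le (hρ y).2,
      intervalIntegral.integral_const_mul]
    congr 1
    exact intervalIntegral.integral_eq_sub_of_hasDerivAt (fun x _ => p.hasDerivAt x)
      (hcont.intervalIntegrable _ _)
  have heq : (fun t : ℝ => Polynomial.eval t p.derivative * (∑ y, if ρ y ≤ t then w y else 0))
      = fun t => ∑ y, (Set.Ici (ρ y)).indicator (fun t => w y * Polynomial.eval t p.derivative) t := by
    funext t
    rw [Finset.mul_sum]
    refine Finset.sum_congr rfl fun y _ => ?_
    by_cases hy : ρ y ≤ t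
    · rw [if_pos hy, Set.indicator_of_mem (Set.mem_Ici.mpr hy)]; ring
    · rw [if_neg hy, Set.indicator_of_notMem (fun h => hy (Set.mem_Ici.mp h)), mul_zero]
  rw [heq, MeasureTheory.integral_finset_sum _
    (f := fun y t => (Set.Ici (ρ y)).indicator (fun t => w y * Polynomial.eval t p.derivative) t) (fun y _ =>
    ((Continuous.integrableOn_Ioc (continuous_const.mul hcont))).indicator measurableSet_Ici)]
  have h2 : ∑ y, w y * (Polynomial.eval Bb p - Polynomial.eval (ρ y) p)
      = (∑ y, w y) * Polynomial.eval Bb p - ∑ y, w y * Polynomial.eval (ρ y) p := by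
    rw [Finset.sum_mul, ← Finset.sum_sub_distrib]
    exact Finset.sum_congr rfl fun y _ => by ring
  rw [Finset.sum_congr rfl fun y _ => hint y, h2]
  ring

lemma stieltjes_ibp (μ : Measure ℝ) [IsProbabilityMeasure μ] (H : ℝ → ℝ) (Bb c e : ℝ)
    (hc : 0 < c) (hce : c ≤ e) (heB : e ≤ Bb)
    (hIic : ∀ t, (μ (Set.Iic t)).toReal = H t)
    (hae : ∀ᵐ x ∂μ, x ∈ Set.Icc c e)
    (p : Polynomial ℝ) :
    ∫ x, Polynomial.eval x p ∂μ
      = Polynomial.eval Bb p - ∫ t in Set.Ioc (0:ℝ) Bb, Polynomial.eval t p.derivative * H t := by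
  have hBb0 : (0:ℝ) ≤ Bb := le_trans (le_trans hc.le hce) heB
  set g' : ℝ → ℝ := fun t => Polynomial.eval t p.derivative with hg'
  have hcont : Continuous g' := p.derivative.continuous_aeval
  set π : Measure ℝ := volume.restrict (Set.Ioc (0:ℝ) Bb) with hπ
  haveI hπfin : IsFiniteMeasure π := by
    constructor
    rw [hπ, Measure.restrict_apply_univ, Real.volume_Ioc]
    exact ENNReal.ofReal_lt_top
  set Φ : ℝ × ℝ → ℝ := fun q => if q.2 ≤ q.1 then g' q.1 else 0 with hΦ
  have hΦeq : Φ = Set.indicator {q : ℝ × ℝ | q.2 ≤ q.1} (fun q => g' q.1) := by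
    funext q
    by_cases hq : q.2 ≤ q.1
    · rw [hΦ]; simp only [if_pos hq]
      rw [Set.indicator_of_mem (by exact hq)]
    · rw [hΦ]; simp only [if_neg hq]
      rw [Set.indicator_of_notMem (by exact hq)]
  have hΦmeas : Measurable Φ := by
    rw [hΦeq]
    exact ((hcont.measurable).comp measurable_fst).indicator
      ((isClosed_le continuous_snd continuous_fst).measurableSet)
  obtain ⟨C, hC⟩ := isCompact_Icc.exists_bound_of_continuousOn
    (hcont.continuousOn (s := Set.Icc (0:ℝ) Bb))
  have hC0 : 0 ≤ C := le_trans (norm_nonneg _) (hC 0 ⟨le_refl _, hBb0⟩)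
  have hfst : ∀ᵐ q ∂(π.prod μ), q.1 ∈ Set.Ioc (0:ℝ) Bb := by
    have hnull : (π.prod μ) {q : ℝ × ℝ | q.1 ∉ Set.Ioc (0:ℝ) Bb} = 0 := by
      have hseteq : {q : ℝ × ℝ | q.1 ∉ Set.Ioc (0:ℝ) Bb}
          = (Set.Ioc (0:ℝ) Bb)ᶜ ×ˢ Set.univ := by
        ext q; simp [Set.mem_prod]
      rw [hseteq, Measure.prod_prod]
      have : π (Set.Ioc (0:ℝ) Bb)ᶜ = 0 := by
        rw [hπ, Measure.restrict_apply (measurableSet_Ioc.compl), Set.compl_inter_self]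
        exact measure_empty
      rw [this, zero_mul]
    have := measure_eq_zero_iff_ae_notMem.mp hnull
    refine this.mono fun q hq => ?_
    simpa using hq
  have hΦint : Integrable Φ (π.prod μ) := by
    refine ⟨hΦmeas.aestronglyMeasurable, HasFiniteIntegral.of_bounded (C := C) ?_⟩
    refine hfst.mono fun q hq => ?_
    rw [hΦ]
    by_cases h2 : q.2 ≤ q.1
    · simp only [if_pos h2]
      exact hC q.1 ⟨hq.1.le, hq.2⟩
    · simp only [if_neg h2, norm_zero]; exact hC0
  have hswap : ∫ t, (∫ x, Φ (t, x) ∂μ) ∂π = ∫ x, (∫ t, Φ (t, x) ∂π) ∂μ := by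
    have := MeasureTheory.integral_integral_swap (f := fun t x => Φ (t, x))
      (μ := π) (ν := μ) (by
        refine hΦint.congr ?_
        refine Filter.Eventually.of_forall fun q => ?_
        rfl)
    exact this
  -- inner integral over μ
  have hinner1 : ∀ t, ∫ x, Φ (t, x) ∂μ = H t * g' t := by
    intro t
    have h1 : (fun x => Φ (t, x)) = (Set.Iic t).indicator (fun _ => g' t) := by
      funext x
      by_cases hx : x ≤ t
      · rw [hΦ]; simp only [if_pos hx]
        rw [Set.indicator_of_mem (Set.mem_Iic.mpr hx)]
      · rw [hΦ]; simp only [if_neg hx]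
        rw [Set.indicator_of_notMem (fun h => hx (Set.mem_Iic.mp h))]
    rw [h1, MeasureTheory.integral_indicator_const _ measurableSet_Iic, measureReal_def, hIic t, smul_eq_mul]
  -- inner integral over π, a.e. x
  have hinner2 : ∀ᵐ x ∂μ, ∫ t, Φ (t, x) ∂π = Polynomial.eval Bb p - Polynomial.eval x p := by
    refine hae.mono fun x hx => ?_
    have h1 : (fun t => Φ (t, x)) = (Set.Ici x).indicator g' := by
      funext t
      by_cases ht : x ≤ t
      · rw [hΦ]; simp only [if_pos ht]
        rw [Set.indicator_of_mem (Set.mem_Ici.mpr ht)]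
      · rw [hΦ]; simp only [if_neg ht]
        rw [Set.indicator_of_notMem (fun h => ht (Set.mem_Ici.mp h))]
    rw [h1, hπ, MeasureTheory.integral_indicator measurableSet_Ici,
      MeasureTheory.Measure.restrict_restrict measurableSet_Ici]
    have hset : Set.Ici x ∩ Set.Ioc 0 Bb = Set.Icc x Bb := by
      ext t
      simp only [Set.mem_inter_iff, Set.mem_Ici, Set.mem_Ioc, Set.mem_Icc]
      constructor
      · rintro ⟨h1', _, h3⟩; exact ⟨h1', h3⟩
      · rintro ⟨h1', h2'⟩
        exact ⟨h1', lt_of_lt_of_le (lt_of_lt_of_le hc hx.1) h1', h2'⟩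
    rw [hset, integral_Icc_eq_integral_Ioc,
      ← intervalIntegral.integral_of_le (le_trans hx.2 heB)]
    exact intervalIntegral.integral_eq_sub_of_hasDerivAt (fun y _ => p.hasDerivAt y)
      (hcont.intervalIntegrable _ _)
  -- eval is integrable wrt μ
  obtain ⟨C₂, hC₂⟩ := isCompact_Icc.exists_bound_of_continuousOn
    ((p.continuous_aeval).continuousOn (s := Set.Icc c e))
  have hpint : Integrable (fun x => Polynomial.eval x p) μ :=
    ⟨(p.continuous_aeval).aestronglyMeasurable,
      HasFiniteIntegral.of_bounded (C := C₂) (hae.mono fun x hx => hC₂ x hx)⟩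
  have hRHS : ∫ x, (∫ t, Φ (t, x) ∂π) ∂μ = Polynomial.eval Bb p - ∫ x, Polynomial.eval x p ∂μ := by
    rw [MeasureTheory.integral_congr_ae hinner2, MeasureTheory.integral_sub
      (integrable_const _) hpint, MeasureTheory.integral_const, probReal_univ, one_smul]
  have hLHS : ∫ t, (∫ x, Φ (t, x) ∂μ) ∂π = ∫ t in Set.Ioc (0:ℝ) Bb, g' t * H t := by
    rw [hπ]
    refine MeasureTheory.integral_congr_ae (Filter.Eventually.of_forall fun t => ?_)
    show ∫ x, Φ (t, x) ∂μ = g' t * H t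
    rw [hinner1 t, mul_comm]
  have : ∫ t in Set.Ioc (0:ℝ) Bb, g' t * H t = Polynomial.eval Bb p - ∫ x, Polynomial.eval x p ∂μ := by
    rw [← hLHS, hswap, hRHS]
  rw [hg'] at this
  linarith [this]

set_option maxHeartbeats 2000000 in
theorem persistent_iff_nondegenerate_limit (ε₀ : ℝ) (hε : 0 < ε₀) (lam : ℝ)
    (hlam : lam = Real.exp ε₀)
    (W : (k : ℕ) → Fin (k + 2) → Fin (k + 2) → ℝ)
    (hpos : ∀ k x y, 0 < W k x y)
    (hrow : ∀ k x, ∑ y, W k x y = 1)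
    (hldp : ∀ k x x' y, W k x y ≤ lam * W k x' y) :
    (0 < Filter.limsup (fun k => sSup {c : ℝ | ∃ a b : Fin (k + 2), a ≠ b ∧
          c = ∑ y, (W k b y - W k a y) ^ 2 / W k a y}) atTop)
    ↔
    ∃ φ : ℕ → ℕ, StrictMono φ ∧
      ∃ (a b : (i : ℕ) → Fin (φ i + 2)), (∀ i, a i ≠ b i) ∧
        ∃ ν : Measure ℝ, IsProbabilityMeasure ν ∧ ν ≠ Measure.dirac 1 ∧
          ∀ f : BoundedContinuousFunction ℝ ℝ,
            Tendsto (fun i => ∫ x, f x ∂(∑ y : Fin (φ i + 2),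
                ENNReal.ofReal (W (φ i) (a i) y) •
                  Measure.dirac (W (φ i) (b i) y / W (φ i) (a i) y)))
              atTop (nhds (∫ x, f x ∂ν)) := by
  have hlam1 : 1 < lam := by rw [hlam]; exact Real.one_lt_exp_iff.mpr hε
  have hlam0 : 0 < lam := lt_trans one_pos hlam1
  have hlaminv : 0 < lam⁻¹ := inv_pos.mpr hlam0
  -- ratio bounds
  have hratio : ∀ k (a b : Fin (k+2)) y, W k b y / W k a y ∈ Set.Icc lam⁻¹ lam := by
    intro k a b y
    constructor
    · rw [le_div_iff₀ (hpos k a y), inv_mul_le_iff₀ hlam0]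
      exact hldp k a b y
    · rw [div_le_iff₀ (hpos k a y)]
      linarith [hldp k b a y]
  have habs : ∀ r ∈ Set.Icc lam⁻¹ lam, (r - 1)^2 ≤ (lam - 1)^2 := by
    rintro r ⟨h1, h2⟩
    have h3 : lam⁻¹ * lam = 1 := inv_mul_cancel₀ (ne_of_gt hlam0)
    have h4 : 2 - lam ≤ lam⁻¹ := by nlinarith [sq_nonneg (lam - 1)]
    exact sq_le_sq' (by linarith) (by linarith)
  -- χ² rewriting
  have hchi : ∀ k (a b : Fin (k+2)), ∑ y, (W k b y - W k a y)^2 / W k a y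
      = ∑ y, W k a y * (W k b y / W k a y - 1)^2 := by
    intro k a b
    refine Finset.sum_congr rfl fun y _ => ?_
    have h := (hpos k a y).ne'
    field_simp
  have hchi_nonneg : ∀ k (a b : Fin (k+2)), 0 ≤ ∑ y, (W k b y - W k a y)^2 / W k a y := by
    intro k a b
    exact Finset.sum_nonneg fun y _ => div_nonneg (sq_nonneg _) (hpos k a y).le
  have hchi_le : ∀ k (a b : Fin (k+2)), ∑ y, (W k b y - W k a y)^2 / W k a y ≤ (lam - 1)^2 := by
    intro k a b
    rw [hchi k a b]
    calc ∑ y, W k a y * (W k b y / W k a y - 1)^2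
        ≤ ∑ y, W k a y * (lam - 1)^2 := by
          refine Finset.sum_le_sum fun y _ => ?_
          exact mul_le_mul_of_nonneg_left (habs _ (hratio k a b y)) (hpos k a y).le
      _ = (lam - 1)^2 := by rw [← Finset.sum_mul, hrow k a, one_mul]
  set u : ℕ → ℝ := fun k => sSup {c : ℝ | ∃ a b : Fin (k + 2), a ≠ b ∧
      c = ∑ y, (W k b y - W k a y) ^ 2 / W k a y} with hu
  have hSfin : ∀ k, {c : ℝ | ∃ a b : Fin (k + 2), a ≠ b ∧
      c = ∑ y, (W k b y - W k a y) ^ 2 / W k a y}.Finite := by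
    intro k
    have : {c : ℝ | ∃ a b : Fin (k + 2), a ≠ b ∧
        c = ∑ y, (W k b y - W k a y) ^ 2 / W k a y} ⊆
        (fun p : Fin (k+2) × Fin (k+2) => ∑ y, (W k p.2 y - W k p.1 y) ^ 2 / W k p.1 y) ''
          Set.univ := by
      rintro c ⟨a, b, -, rfl⟩
      exact ⟨(a, b), Set.mem_univ _, rfl⟩
    exact Set.Finite.subset (Set.toFinite _) this
  have hSne : ∀ k, {c : ℝ | ∃ a b : Fin (k + 2), a ≠ b ∧
      c = ∑ y, (W k b y - W k a y) ^ 2 / W k a y}.Nonempty := by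
    intro k
    exact ⟨_, 0, 1, by simp [Fin.ext_iff], rfl⟩
  have hu_mem : ∀ k, ∃ a b : Fin (k + 2), a ≠ b ∧
      u k = ∑ y, (W k b y - W k a y) ^ 2 / W k a y :=
    fun k => (hSne k).csSup_mem (hSfin k)
  have hu_le : ∀ k, u k ≤ (lam - 1)^2 := by
    intro k
    refine csSup_le (hSne k) ?_
    rintro c ⟨a, b, -, rfl⟩
    exact hchi_le k a b
  have hu_ge : ∀ k (a b : Fin (k+2)), a ≠ b →
      ∑ y, (W k b y - W k a y) ^ 2 / W k a y ≤ u k := by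
    intro k a b hab
    refine le_csSup ?_ ⟨a, b, hab, rfl⟩
    exact ((hSfin k).bddAbove)
  constructor
  · -- forward direction

    intro h
    have hc0 : 0 < Filter.limsup u atTop / 2 := by linarith
    set c : ℝ := Filter.limsup u atTop / 2 with hcdef
    have hclt : c < Filter.limsup u atTop := by rw [hcdef]; linarith
    have hu0 : ∀ k, 0 ≤ u k := fun k =>
      le_trans (hchi_nonneg k 0 1) (hu_ge k 0 1 (by simp [Fin.ext_iff]))
    have hcob : Filter.IsCoboundedUnder (· ≤ ·) atTop u :=
      Filter.isCoboundedUnder_le_of_le atTop hu0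
    have hfreq : ∃ᶠ k in atTop, c < u k := Filter.frequently_lt_of_lt_limsup hcob hclt
    obtain ⟨φ₀, hφ₀, hφ₀P⟩ := Filter.extraction_of_frequently_atTop hfreq
    choose A B hAB hEq using fun n => hu_mem (φ₀ n)
    set w : (n : ℕ) → Fin (φ₀ n + 2) → ℝ := fun n => W (φ₀ n) (A n) with hw
    set r : (n : ℕ) → Fin (φ₀ n + 2) → ℝ := fun n y => W (φ₀ n) (B n) y / W (φ₀ n) (A n) y
      with hrdef
    have hwpos : ∀ n y, 0 < w n y := fun n y => hpos _ _ y
    have hwsum : ∀ n, ∑ y, w n y = 1 := fun n => hrow _ _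
    have hrmem : ∀ n y, r n y ∈ Set.Icc lam⁻¹ lam := fun n y => hratio _ _ _ y
    set F : ℕ → ℝ → ℝ := fun n t => ∑ y, if r n y ≤ t then w n y else 0 with hF
    have hFmono : ∀ n, Monotone (F n) := by
      intro n t t' htt'
      refine Finset.sum_le_sum fun y _ => ?_
      by_cases hy : r n y ≤ t
      · rw [if_pos hy, if_pos (le_trans hy htt')]
      · rw [if_neg hy]
        by_cases hy' : r n y ≤ t'
        · rw [if_pos hy']; exact (hwpos n y).le
        · rw [if_neg hy']
    have hF0 : ∀ n t, 0 ≤ F n t := by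
      intro n t
      refine Finset.sum_nonneg fun y _ => ?_
      by_cases hy : r n y ≤ t
      · rw [if_pos hy]; exact (hwpos n y).le
      · rw [if_neg hy]
    have hF1 : ∀ n t, F n t ≤ 1 := by
      intro n t
      rw [← hwsum n]
      refine Finset.sum_le_sum fun y _ => ?_
      by_cases hy : r n y ≤ t
      · rw [if_pos hy]
      · rw [if_neg hy]; exact (hwpos n y).le
    have hFlow : ∀ n (t : ℝ), t < lam⁻¹ → F n t = 0 := by
      intro n t ht
      refine Finset.sum_eq_zero fun y _ => ?_
      rw [if_neg]
      intro hy
      exact absurd (lt_of_lt_of_le ht (hrmem n y).1) (not_lt.mpr hy)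
    have hFhigh : ∀ n (t : ℝ), lam ≤ t → F n t = 1 := by
      intro n t ht
      rw [← hwsum n]
      refine Finset.sum_congr rfl fun y _ => ?_
      rw [if_pos (le_trans (hrmem n y).2 ht)]
    -- compactness extraction on rational CDF values
    set seq : ℕ → (ℚ → Set.Icc (0:ℝ) 1) := fun n q => ⟨F n q, hF0 n q, hF1 n q⟩ with hseq
    obtain ⟨G₀, -, φ₁, hφ₁, hG₀⟩ := isCompact_univ.tendsto_subseq (fun n => Set.mem_univ (seq n))
    have hqconv : ∀ q : ℚ, Tendsto (fun m => F (φ₁ m) (q:ℝ)) atTop (𝓝 ((G₀ q : ℝ))) := by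
      intro q
      have h1 : Tendsto (fun m => (seq (φ₁ m)) q) atTop (𝓝 (G₀ q)) :=
        ((continuous_apply q).tendsto G₀).comp hG₀
      exact (continuous_subtype_val.tendsto (G₀ q)).comp h1
    set G : ℚ → ℝ := fun q => (G₀ q : ℝ) with hG
    have hG0' : ∀ q, 0 ≤ G q := fun q => (G₀ q).2.1
    have hG1' : ∀ q, G q ≤ 1 := fun q => (G₀ q).2.2
    have hGmono : ∀ q q' : ℚ, q ≤ q' → G q ≤ G q' := by
      intro q q' hqq'
      refine le_of_tendsto_of_tendsto (hqconv q) (hqconv q')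
        (Filter.Eventually.of_forall fun m => hFmono (φ₁ m) ?_)
      exact_mod_cast hqq'
    have hGlow : ∀ q : ℚ, (q:ℝ) < lam⁻¹ → G q = 0 := by
      intro q hq
      refine tendsto_nhds_unique (hqconv q) ?_
      have : (fun m => F (φ₁ m) (q:ℝ)) = fun _ => 0 := funext fun m => hFlow (φ₁ m) q hq
      rw [this]
      exact tendsto_const_nhds
    have hGhigh : ∀ q : ℚ, lam ≤ (q:ℝ) → G q = 1 := by
      intro q hq
      refine tendsto_nhds_unique (hqconv q) ?_
      have : (fun m => F (φ₁ m) (q:ℝ)) = fun _ => 1 := funext fun m => hFhigh (φ₁ m) q hq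
      rw [this]
      exact tendsto_const_nhds
    -- define the limit CDF H
    set H : ℝ → ℝ := fun t => sInf (G '' {q : ℚ | t < (q:ℝ)}) with hH
    have hne : ∀ t : ℝ, (G '' {q : ℚ | t < (q:ℝ)}).Nonempty := by
      intro t
      obtain ⟨q, hq⟩ := exists_rat_gt t
      exact ⟨G q, q, hq, rfl⟩
    have hbb : ∀ t : ℝ, BddBelow (G '' {q : ℚ | t < (q:ℝ)}) := by
      intro t
      refine ⟨0, ?_⟩
      rintro x ⟨q, -, rfl⟩
      exact hG0' q
    have Hle : ∀ (t : ℝ) (q : ℚ), t < (q:ℝ) → H t ≤ G q := fun t q hq =>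
      csInf_le (hbb t) ⟨q, hq, rfl⟩
    have Hge0 : ∀ t, 0 ≤ H t := by
      intro t
      refine le_csInf (hne t) ?_
      rintro x ⟨q, -, rfl⟩
      exact hG0' q
    have Hle1 : ∀ t, H t ≤ 1 := by
      intro t
      obtain ⟨q, hq⟩ := exists_rat_gt t
      exact le_trans (Hle t q hq) (hG1' q)
    have Hmono : Monotone H := by
      intro t t' htt'
      refine csInf_le_csInf (hbb t) (hne t') ?_
      rintro x ⟨q, hq, rfl⟩
      exact ⟨q, lt_of_le_of_lt htt' hq, rfl⟩
    have Hlow : ∀ t : ℝ, t < lam⁻¹ → H t = 0 := by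
      intro t ht
      obtain ⟨q, hq1, hq2⟩ := exists_rat_btwn ht
      exact le_antisymm (le_trans (Hle t q hq1) (le_of_eq (hGlow q hq2))) (Hge0 t)
    have Hhigh : ∀ t : ℝ, lam ≤ t → H t = 1 := by
      intro t ht
      refine le_antisymm (Hle1 t) ?_
      refine le_csInf (hne t) ?_
      rintro x ⟨q, hq, rfl⟩
      exact le_of_eq (hGhigh q (le_trans ht hq.le)).symm
    have Hright : ∀ x : ℝ, ContinuousWithinAt H (Set.Ici x) x := by
      intro x
      rw [Metric.continuousWithinAt_iff]
      intro ε hε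
      obtain ⟨v, ⟨q, hq, rfl⟩, hvlt⟩ := exists_lt_of_csInf_lt (hne x)
        (lt_add_of_pos_right (H x) hε)
      rw [Set.mem_setOf_eq] at hq
      refine ⟨(q:ℝ) - x, by linarith, fun y hy hdy => ?_⟩
      have hyx : x ≤ y := hy
      rw [Real.dist_eq] at hdy
      have hylt : y < (q:ℝ) := by
        rw [abs_of_nonneg (by linarith : (0:ℝ) ≤ y - x)] at hdy
        linarith
      have h1 : H y ≤ G q := Hle y q hylt
      have h2 : H x ≤ H y := Hmono hyx
      rw [Real.dist_eq, abs_of_nonneg (by linarith : (0:ℝ) ≤ H y - H x)]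
      linarith
    set S : StieltjesFunction ℝ := ⟨H, Hmono, Hright⟩ with hS
    have hScoe : (S : ℝ → ℝ) = H := rfl
    set μ : Measure ℝ := S.measure with hμ
    have hbot : Tendsto H atBot (𝓝 0) := by
      have hev : ∀ᶠ t in atBot, H t = 0 :=
        eventually_atBot.mpr ⟨lam⁻¹ / 2, fun t ht => Hlow t (by linarith)⟩
      exact Tendsto.congr' (hev.mono fun t ht => ht.symm) tendsto_const_nhds
    have htop : Tendsto H atTop (𝓝 1) := by
      have hev : ∀ᶠ t in atTop, H t = 1 :=
        eventually_atTop.mpr ⟨lam, fun t ht => Hhigh t ht⟩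
      exact Tendsto.congr' (hev.mono fun t ht => ht.symm) tendsto_const_nhds
    have hbot' : Tendsto (S : ℝ → ℝ) atBot (𝓝 0) := hbot
    have htop' : Tendsto (S : ℝ → ℝ) atTop (𝓝 1) := htop
    have hIic' : ∀ t, μ (Set.Iic t) = ENNReal.ofReal (H t) := by
      intro t
      rw [hμ, S.measure_Iic hbot' t, sub_zero, hScoe]
    have hprob : IsProbabilityMeasure μ := by
      constructor
      rw [hμ, S.measure_univ hbot' htop']
      simp
    have hIlow : μ (Set.Iio lam⁻¹) = 0 := by
      have hseteq : Set.Iio lam⁻¹ = ⋃ n : ℕ, Set.Iic (lam⁻¹ - 1/(n+1 : ℝ)) := by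
        ext x
        simp only [Set.mem_Iio, Set.mem_iUnion, Set.mem_Iic]
        constructor
        · intro hx
          obtain ⟨n, hn⟩ := exists_nat_one_div_lt (by linarith : (0:ℝ) < lam⁻¹ - x)
          exact ⟨n, by linarith⟩
        · rintro ⟨n, hn⟩
          have : (0:ℝ) < 1/(n+1 : ℝ) := by positivity
          linarith
      rw [hseteq]
      refine measure_iUnion_null fun n => ?_
      have h1 : (0:ℝ) < 1/(n+1 : ℝ) := by positivity
      rw [hμ, S.measure_Iic hbot' _, sub_zero, hScoe, Hlow _ (by linarith), ENNReal.ofReal_zero]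
    have hIhigh : μ (Set.Ioi lam) = 0 := by
      have h1 : μ (Set.Iic lam) = 1 := by
        rw [hμ, S.measure_Iic hbot' _, sub_zero, hScoe, Hhigh lam le_rfl, ENNReal.ofReal_one]
      have h2 := measure_compl (measurableSet_Iic (a := lam)) (measure_ne_top μ _)
      rw [h1, Set.compl_Iic] at h2
      rw [h2]
      haveI := hprob
      rw [measure_univ, tsub_self]
    have hsupp : ∀ᵐ x ∂μ, x ∈ Set.Icc lam⁻¹ lam := by
      have hnull : μ (Set.Icc lam⁻¹ lam)ᶜ = 0 := by
        refine measure_mono_null ?_ (measure_union_null hIlow hIhigh)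
        intro x hx
        simp only [Set.mem_compl_iff, Set.mem_Icc, not_and_or, not_le] at hx
        rcases hx with hx | hx
        · exact Set.mem_union_left _ hx
        · exact Set.mem_union_right _ hx
      refine (measure_eq_zero_iff_ae_notMem.mp hnull).mono fun x hx => ?_
      simpa using hx
    -- pointwise convergence of CDFs at continuity points
    have hHpt : ∀ t : ℝ, ContinuousAt H t → Tendsto (fun m => F (φ₁ m) t) atTop (𝓝 (H t)) := by
      intro t hct
      rw [Metric.tendsto_atTop]
      intro ε hε
      obtain ⟨v, ⟨q, hq, rfl⟩, hvlt⟩ := exists_lt_of_csInf_lt (hne t)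
        (lt_add_of_pos_right (H t) (by linarith : (0:ℝ) < ε/4))
      rw [Set.mem_setOf_eq] at hq
      obtain ⟨δ, hδ0, hδ⟩ := Metric.continuousAt_iff.mp hct (ε/4) (by linarith)
      obtain ⟨q', hq'1, hq'2⟩ := exists_rat_btwn (show t - δ/2 < t by linarith)
      have hHs : |H (t - δ/2) - H t| < ε/4 := by
        have := hδ (x := t - δ/2) (by rw [Real.dist_eq, abs_of_nonpos (by linarith)]; linarith)
        rwa [Real.dist_eq] at this
      have hGq' : H t - ε/4 < G q' := by
        have h1 := (abs_lt.mp hHs).1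
        exact lt_of_lt_of_le (by linarith) (Hle (t - δ/2) q' hq'1)
      obtain ⟨N1, hN1⟩ := Metric.tendsto_atTop.mp (hqconv q) (ε/4) (by linarith)
      obtain ⟨N2, hN2⟩ := Metric.tendsto_atTop.mp (hqconv q') (ε/4) (by linarith)
      refine ⟨max N1 N2, fun m hm => ?_⟩
      have h1 := hN1 m (le_trans (le_max_left _ _) hm)
      have h2 := hN2 m (le_trans (le_max_right _ _) hm)
      rw [Real.dist_eq] at h1 h2 ⊢
      have hu1 : F (φ₁ m) t ≤ F (φ₁ m) (q:ℝ) := hFmono _ hq.le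
      have hl1 : F (φ₁ m) (q':ℝ) ≤ F (φ₁ m) t := hFmono _ hq'2.le
      have hHtq : H t ≤ G q := Hle t q hq
      rw [abs_lt] at h1 h2 ⊢
      constructor <;> [linarith [h2.1]; linarith [h1.1, h1.2]]
    -- IBP identities
    set Bb : ℝ := lam + 1 with hBbdef
    have hdisc : ∀ (m : ℕ) (p : Polynomial ℝ),
        ∑ y, w (φ₁ m) y * Polynomial.eval (r (φ₁ m) y) p
          = Polynomial.eval Bb p - ∫ t in Set.Ioc (0:ℝ) Bb,
              Polynomial.eval t p.derivative * F (φ₁ m) t := by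
      intro m p
      have := discrete_ibp (w (φ₁ m)) (r (φ₁ m)) Bb p (fun y =>
        ⟨lt_of_lt_of_le hlaminv (hrmem _ y).1, le_trans (hrmem _ y).2 (by linarith)⟩)
      rw [hwsum (φ₁ m), one_mul] at this
      exact this
    have hlaminvle : lam⁻¹ ≤ lam := by
      have : lam⁻¹ ≤ 1 := by
        rw [inv_le_one_iff₀]
        right; exact hlam1.le
      linarith
    have hIicReal : ∀ t, (μ (Set.Iic t)).toReal = H t := by
      intro t
      rw [hIic' t, ENNReal.toReal_ofReal (Hge0 t)]
    haveI := hprob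
    have hcont_ibp : ∀ p : Polynomial ℝ, ∫ x, Polynomial.eval x p ∂μ
        = Polynomial.eval Bb p - ∫ t in Set.Ioc (0:ℝ) Bb,
            Polynomial.eval t p.derivative * H t :=
      fun p => stieltjes_ibp μ H Bb lam⁻¹ lam hlaminv hlaminvle (by linarith) hIicReal hsupp p
    -- moment convergence
    have hFmeas : ∀ n, Measurable (F n) := by
      intro n
      refine Finset.measurable_sum _ fun y _ => ?_
      have : (fun t => if r n y ≤ t then w n y else 0)
          = (Set.Ici (r n y)).indicator fun _ => w n y := by
        funext t
        by_cases ht : r n y ≤ t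
        · rw [if_pos ht, Set.indicator_of_mem (Set.mem_Ici.mpr ht)]
        · rw [if_neg ht, Set.indicator_of_notMem (fun hmem => ht (Set.mem_Ici.mp hmem))]
      rw [this]
      exact measurable_const.indicator measurableSet_Ici
    have hmom : ∀ p : Polynomial ℝ,
        Tendsto (fun m => ∑ y, w (φ₁ m) y * Polynomial.eval (r (φ₁ m) y) p) atTop
          (𝓝 (∫ x, Polynomial.eval x p ∂μ)) := by
      intro p
      have hdct : Tendsto (fun m => ∫ t in Set.Ioc (0:ℝ) Bb,
          Polynomial.eval t p.derivative * F (φ₁ m) t) atTop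
          (𝓝 (∫ t in Set.Ioc (0:ℝ) Bb, Polynomial.eval t p.derivative * H t)) := by
        refine MeasureTheory.tendsto_integral_of_dominated_convergence
          (fun t => |Polynomial.eval t p.derivative|) ?_ ?_ ?_ ?_
        · intro m
          exact ((p.derivative.continuous_aeval).aestronglyMeasurable).mul
            ((hFmeas (φ₁ m)).aestronglyMeasurable)
        · exact ((p.derivative.continuous_aeval).abs).integrableOn_Ioc
        · intro m
          refine Filter.Eventually.of_forall fun t => ?_
          rw [Real.norm_eq_abs, abs_mul]
          have h1 : |F (φ₁ m) t| ≤ 1 := by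
            rw [abs_of_nonneg (hF0 _ t)]
            exact hF1 _ t
          calc |Polynomial.eval t p.derivative| * |F (φ₁ m) t|
              ≤ |Polynomial.eval t p.derivative| * 1 :=
                mul_le_mul_of_nonneg_left h1 (abs_nonneg _)
            _ = |Polynomial.eval t p.derivative| := mul_one _
        · have hNnull : MeasureTheory.volume {t : ℝ | ¬ContinuousAt H t} = 0 :=
            (Hmono.countable_not_continuousAt).measure_zero _
          have hae' : ∀ᵐ t ∂(MeasureTheory.volume.restrict (Set.Ioc (0:ℝ) Bb)),
              ContinuousAt H t := by
            refine ae_restrict_of_ae ?_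
            refine (measure_eq_zero_iff_ae_notMem.mp hNnull).mono fun t ht => ?_
            simpa using ht
          exact hae'.mono fun t hct => (hHpt t hct).const_mul _
      have hsub := hdct.const_sub (Polynomial.eval Bb p)
      rw [← hcont_ibp p] at hsub
      exact hsub.congr fun m => (hdisc m p).symm
    -- convergence for bounded continuous functions
    have hBCF : ∀ f : BoundedContinuousFunction ℝ ℝ,
        Tendsto (fun m => ∑ y, w (φ₁ m) y * f (r (φ₁ m) y)) atTop (𝓝 (∫ x, f x ∂μ)) := by
      intro f
      rw [Metric.tendsto_atTop]
      intro ε hε'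
      obtain ⟨p, hp⟩ := exists_polynomial_near_of_continuousOn 0 Bb f
        f.continuous.continuousOn (ε/4) (by linarith)
      have hrIcc : ∀ m y, r (φ₁ m) y ∈ Set.Icc (0:ℝ) Bb := fun m y =>
        ⟨le_trans hlaminv.le (hrmem _ y).1, le_trans (hrmem _ y).2 (by linarith)⟩
      have hsupp' : ∀ᵐ x ∂μ, x ∈ Set.Icc (0:ℝ) Bb := by
        refine hsupp.mono fun x hx => ?_
        exact ⟨le_trans hlaminv.le hx.1, le_trans hx.2 (by linarith)⟩
      have h1 : ∀ m, |∑ y, w (φ₁ m) y * f (r (φ₁ m) y)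
          - ∑ y, w (φ₁ m) y * Polynomial.eval (r (φ₁ m) y) p| ≤ ε/4 := by
        intro m
        rw [← Finset.sum_sub_distrib]
        refine le_trans (Finset.abs_sum_le_sum_abs _ _) ?_
        have hterm : ∀ y ∈ Finset.univ, |w (φ₁ m) y * f (r (φ₁ m) y)
            - w (φ₁ m) y * Polynomial.eval (r (φ₁ m) y) p| ≤ w (φ₁ m) y * (ε/4) := by
          intro y _
          rw [← mul_sub, abs_mul, abs_of_pos (hwpos _ y)]
          refine mul_le_mul_of_nonneg_left ?_ (hwpos _ y).le
          rw [abs_sub_comm]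
          exact (hp _ (hrIcc m y)).le
        refine le_trans (Finset.sum_le_sum hterm) ?_
        rw [← Finset.sum_mul, hwsum (φ₁ m), one_mul]
      obtain ⟨Cp, hCp⟩ := isCompact_Icc.exists_bound_of_continuousOn
        ((p.continuous_aeval).continuousOn (s := Set.Icc (0:ℝ) Bb))
      have hpint : Integrable (fun x => Polynomial.eval x p) μ :=
        ⟨(p.continuous_aeval).aestronglyMeasurable,
          HasFiniteIntegral.of_bounded (C := Cp) (hsupp'.mono fun x hx => hCp x hx)⟩
      have h2 : |∫ x, Polynomial.eval x p ∂μ - ∫ x, f x ∂μ| ≤ ε/4 := by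
        rw [← MeasureTheory.integral_sub hpint (f.integrable μ)]
        have hb : ∀ᵐ x ∂μ, ‖Polynomial.eval x p - f x‖ ≤ ε/4 :=
          hsupp'.mono fun x hx => (hp x hx).le
        have := norm_integral_le_of_norm_le_const (μ := μ) hb
        rwa [probReal_univ, mul_one, Real.norm_eq_abs] at this
      obtain ⟨N, hN⟩ := Metric.tendsto_atTop.mp (hmom p) (ε/4) (by linarith)
      refine ⟨N, fun m hm => ?_⟩
      have h3 := hN m hm
      rw [Real.dist_eq] at h3 ⊢
      have e1 := abs_sub_le (∑ y, w (φ₁ m) y * f (r (φ₁ m) y))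
        (∑ y, w (φ₁ m) y * Polynomial.eval (r (φ₁ m) y) p) (∫ x, f x ∂μ)
      have e2 := abs_sub_le (∑ y, w (φ₁ m) y * Polynomial.eval (r (φ₁ m) y) p)
        (∫ x, Polynomial.eval x p ∂μ) (∫ x, f x ∂μ)
      linarith [h1 m]
    -- assembly
    refine ⟨φ₀ ∘ φ₁, hφ₀.comp hφ₁, (fun i => A (φ₁ i)), (fun i => B (φ₁ i)),
      fun i => hAB (φ₁ i), μ, hprob, ?_, ?_⟩
    · -- μ ≠ dirac 1
      intro hdir
      have hFstar0 : ∀ x : ℝ, (0:ℝ) ≤ min ((x-1)^2) ((lam-1)^2) :=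
        fun x => le_min (sq_nonneg _) (sq_nonneg _)
      set Fstar : BoundedContinuousFunction ℝ ℝ :=
        clampBCF (fun x => min ((x-1)^2) ((lam-1)^2)) ((lam-1)^2)
          (Continuous.min (by continuity) continuous_const)
          hFstar0 (fun x => min_le_right _ _) with hFstar
      have hlb : ∀ m, c ≤ ∑ y, w (φ₁ m) y * Fstar (r (φ₁ m) y) := by
        intro m
        have hEq2 : ∑ y, w (φ₁ m) y * Fstar (r (φ₁ m) y)
            = ∑ y, w (φ₁ m) y * (r (φ₁ m) y - 1)^2 := by
          refine Finset.sum_congr rfl fun y _ => ?_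
          congr 1
          exact min_eq_left (habs _ (hrmem _ y))
        rw [hEq2, ← hchi (φ₀ (φ₁ m)) (A (φ₁ m)) (B (φ₁ m)), ← hEq (φ₁ m)]
        exact (hφ₀P (φ₁ m)).le
      have hFμ : c ≤ ∫ x, Fstar x ∂μ :=
        ge_of_tendsto (hBCF Fstar) (Filter.Eventually.of_forall hlb)
      rw [hdir, MeasureTheory.integral_dirac] at hFμ
      have : Fstar (1:ℝ) = 0 := by
        rw [hFstar, clampBCF_apply]
        have h0 : ((1:ℝ)-1)^2 = 0 := by norm_num
        rw [h0]
        exact min_eq_left (sq_nonneg _)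
      rw [this] at hFμ
      linarith
    · -- the weak convergence statement
      intro f
      refine (hBCF f).congr fun i => ?_
      exact (integral_sum_smul_dirac (w (φ₁ i)) (r (φ₁ i))
        (fun y => (hwpos _ y).le) f).symm



  · -- backward direction
    rintro ⟨φ, hφ, a, b, hab, ν, hν, hν1, hconv⟩
    -- ν gives positive mass away from 1
    obtain ⟨ε, hε0, hεpos⟩ : ∃ ε : ℝ, 0 < ε ∧ 0 < (ν {x | ε ≤ |x - 1|}).toReal := by
      by_contra h
      push_neg at h
      have hz : ∀ n : ℕ, ν {x | 1/(n+1 : ℝ) ≤ |x - 1|} = 0 := by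
        intro n
        have h1 : (0:ℝ) < 1/(n+1 : ℝ) := by positivity
        have := h _ h1
        have hfin : ν {x | 1/(n+1 : ℝ) ≤ |x - 1|} ≠ ⊤ := measure_ne_top ν _
        have h2 : (ν {x | 1/(n+1 : ℝ) ≤ |x - 1|}).toReal = 0 :=
          le_antisymm this ENNReal.toReal_nonneg
        exact ((ENNReal.toReal_eq_zero_iff _).mp h2).resolve_right hfin
      have hcompl : ν {(1:ℝ)}ᶜ = 0 := by
        have hset : ({(1:ℝ)}ᶜ : Set ℝ) = ⋃ n : ℕ, {x | 1/(n+1 : ℝ) ≤ |x - 1|} := by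
          ext x
          simp only [Set.mem_compl_iff, Set.mem_singleton_iff, Set.mem_iUnion, Set.mem_setOf_eq]
          constructor
          · intro hx
            have habs0 : 0 < |x - 1| := abs_pos.mpr (sub_ne_zero.mpr hx)
            obtain ⟨n, hn⟩ := exists_nat_one_div_lt habs0
            exact ⟨n, le_of_lt hn⟩
          · rintro ⟨n, hn⟩
            intro hx
            rw [hx] at hn
            simp at hn
            have : (0:ℝ) < 1/(n+1 : ℝ) := by positivity
            linarith
        rw [hset]
        exact measure_iUnion_null fun n => hz n
      apply absurd _ hν1
      refine Measure.ext fun s hs => ?_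
      by_cases hmem : (1:ℝ) ∈ s
      · have hsc : ν sᶜ = 0 := by
          refine measure_mono_null ?_ hcompl
          intro x hx
          simp only [Set.mem_compl_iff, Set.mem_singleton_iff]
          intro h1
          exact hx (h1 ▸ hmem)
        have hadd : ν s + ν sᶜ = 1 := by
          rw [measure_add_measure_compl hs, measure_univ]
        rw [hsc, add_zero] at hadd
        rw [hadd, Measure.dirac_apply' _ hs, Set.indicator_of_mem hmem, Pi.one_apply]
      · have hsub : s ⊆ {(1:ℝ)}ᶜ := fun x hx => by
          simp only [Set.mem_compl_iff, Set.mem_singleton_iff]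
          intro h1
          exact hmem (h1 ▸ hx)
        rw [measure_mono_null hsub hcompl, Measure.dirac_apply' _ hs,
          Set.indicator_of_notMem hmem]
    -- test function
    have hScl : MeasurableSet {x : ℝ | ε ≤ |x - 1|} :=
      (isClosed_le continuous_const (continuous_id.sub continuous_const).abs).measurableSet
    set g : BoundedContinuousFunction ℝ ℝ := clampBCF (fun x => min |x - 1| ε) ε
      (Continuous.min (continuous_id.sub continuous_const).abs continuous_const)
      (fun x => le_min (abs_nonneg _) hε0.le) (fun x => min_le_right _ _) with hg
    set L : ℝ := ∫ x, g x ∂ν with hL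
    have hLpos : 0 < L := by
      have h1 : ∫ x, Set.indicator {x : ℝ | ε ≤ |x - 1|} (fun _ => ε) x ∂ν ≤ L := by
        refine integral_mono ((integrable_const ε).indicator hScl) (g.integrable ν) fun x => ?_
        by_cases hx : x ∈ {x : ℝ | ε ≤ |x - 1|}
        · rw [Set.indicator_of_mem hx]
          exact le_min hx le_rfl
        · rw [Set.indicator_of_notMem hx]
          exact le_min (abs_nonneg _) hε0.le
      rw [integral_indicator_const (ε : ℝ) hScl, smul_eq_mul] at h1
      calc (0:ℝ) < (ν {x : ℝ | ε ≤ |x - 1|}).toReal * ε := by positivity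
        _ ≤ L := h1
    have hconvg := hconv g
    have hconvg' : Tendsto (fun i => ∑ y, W (φ i) (a i) y *
        g (W (φ i) (b i) y / W (φ i) (a i) y)) atTop (nhds L) := by
      refine hconvg.congr fun i => ?_
      exact integral_sum_smul_dirac _ _ (fun y => (hpos _ _ y).le) g
    have hev : ∀ᶠ i in atTop, L/2 ≤ ∑ y, W (φ i) (a i) y *
        g (W (φ i) (b i) y / W (φ i) (a i) y) :=
      hconvg'.eventually (eventually_ge_nhds (by linarith))
    have hkey : ∀ᶠ i in atTop, (L/2)^2 ≤ u (φ i) := by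
      refine hev.mono fun i hi => ?_
      set w := W (φ i) (a i)
      set r := fun y => W (φ i) (b i) y / W (φ i) (a i) y
      have hCS : (∑ y, w y * g (r y))^2 ≤ (∑ y, w y) * (∑ y, w y * g (r y)^2) := by
        refine Finset.sum_sq_le_sum_mul_sum_of_sq_eq_mul _ (fun y _ => (hpos _ _ y).le)
          (fun y _ => mul_nonneg (hpos _ _ y).le (sq_nonneg _)) (fun y _ => ?_)
        ring
      rw [hrow, one_mul] at hCS
      have h2 : ∑ y, w y * g (r y)^2 ≤ ∑ y, w y * (r y - 1)^2 := by
        refine Finset.sum_le_sum fun y _ => ?_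
        refine mul_le_mul_of_nonneg_left ?_ (hpos _ _ y).le
        have h3 : g (r y) ≤ |r y - 1| := min_le_left _ _
        have h4 : 0 ≤ g (r y) := le_min (abs_nonneg _) hε0.le
        calc g (r y)^2 ≤ |r y - 1|^2 := by nlinarith
          _ = (r y - 1)^2 := sq_abs _
      have h5 : ∑ y, w y * (r y - 1)^2 ≤ u (φ i) := by
        rw [← hchi (φ i) (a i) (b i)]
        exact hu_ge (φ i) (a i) (b i) (hab i)
      have h6 : L/2 ≤ ∑ y, w y * g (r y) := hi
      nlinarith [hLpos]
    have hfreq : ∃ᶠ k in atTop, (L/2)^2 ≤ u k :=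
      (hφ.tendsto_atTop).frequently hkey.frequently
    have hbdd : IsBoundedUnder (· ≤ ·) atTop u := ⟨(lam-1)^2,
      Filter.eventually_map.mpr (Filter.Eventually.of_forall hu_le)⟩
    calc (0:ℝ) < (L/2)^2 := by positivity
      _ ≤ Filter.limsup u atTop := le_limsup_of_frequently_le hfreq hbdd
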